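/- Let T be a finite tree (a connected acyclic simple graph). Suppose each vertex v of T is assigned a list L(v) of 2 distinct real numbers. Then there is a coloring f of the vertices with f(v) ∈ L(v) for every vertex v, such that Σ_{x ∈ N(u)} f(x) ≠ Σ_{x ∈ N(v)} f(x) for every pair of adjacent vertices u and v. -/

import Mathlib

set_option linter.unusedSectionVars false
set_option maxHeartbeats 1600000

open Finset

/-- The sum of the values of `f` over the neighborhood of `u` in `G`. -/
noncomputable def nsum {V : Type*} [Fintype V] {M : Type*} [AddCommMonoid M]
    (G : SimpleGraph V) (f : V → M) (u : V) : M :=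
  letI := Classical.decRel G.Adj
  ∑ x ∈ G.neighborFinset u, f x

section AuxLemmas
variable {V : Type*} [Fintype V] [DecidableEq V]

private lemma nsum_eq_sum_ite (T : SimpleGraph V) [DecidableRel T.Adj] (f : V → ℝ) (u : V) :
    nsum T f u = ∑ x, (if T.Adj u x then f x else 0) := by
  rw [nsum, ← Finset.sum_filter]
  refine Finset.sum_congr ?_ (fun _ _ => rfl)
  ext x
  simp [SimpleGraph.mem_neighborFinset]

private lemma alt_sum_bij (S : Finset V) (lo hi : V → ℝ) (ψ : V → V)
    (hinj : Set.InjOn ψ S) (him : S.image ψ = S) :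
    ∑ A ∈ S.powerset, (∏ _x ∈ S \ A, (-1 : ℝ)) *
      ∏ v ∈ S, (if ψ v ∈ A then hi (ψ v) else lo (ψ v)) =
      ∏ x ∈ S, (hi x - lo x) := by
  have h1 : ∀ A : Finset V, (∏ v ∈ S, (if ψ v ∈ A then hi (ψ v) else lo (ψ v)))
      = ∏ x ∈ S, (if x ∈ A then hi x else lo x) := by
    intro A
    conv_rhs => rw [← him, Finset.prod_image (fun a ha b hb h => hinj ha hb h)]
  have h2 : ∀ A ∈ S.powerset, (∏ x ∈ S, (if x ∈ A then hi x else lo x))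
      = (∏ x ∈ A, hi x) * ∏ x ∈ S \ A, lo x := by
    intro A hA
    rw [Finset.mem_powerset] at hA
    rw [Finset.prod_ite, Finset.filter_mem_eq_inter, Finset.inter_eq_right.2 hA,
      ← Finset.sdiff_eq_filter]
  calc ∑ A ∈ S.powerset, (∏ _x ∈ S \ A, (-1 : ℝ)) *
      ∏ v ∈ S, (if ψ v ∈ A then hi (ψ v) else lo (ψ v))
      = ∑ A ∈ S.powerset, (∏ x ∈ A, hi x) * ∏ x ∈ S \ A, -(lo x) := by
        refine Finset.sum_congr rfl fun A hA => ?_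
        rw [h1, h2 A hA]
        rw [show (∏ _x ∈ S \ A, (-1:ℝ)) * ((∏ x ∈ A, hi x) * ∏ x ∈ S \ A, lo x)
          = (∏ x ∈ A, hi x) * ((∏ _x ∈ S \ A, (-1:ℝ)) * ∏ x ∈ S \ A, lo x) by ring]
        rw [← Finset.prod_mul_distrib]
        simp
    _ = ∏ x ∈ S, (hi x + -(lo x)) := (Finset.prod_add hi (fun x => -(lo x)) S).symm
    _ = ∏ x ∈ S, (hi x - lo x) := by
        refine Finset.prod_congr rfl fun x _ => ?_; ring

private lemma alt_sum_deg (S : Finset V) (lo hi : V → ℝ) (ψ : V → V)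
    (x₀ : V) (hx₀ : x₀ ∈ S) (hψ : ∀ v ∈ S, ψ v ≠ x₀) :
    ∑ A ∈ S.powerset, (∏ _x ∈ S \ A, (-1 : ℝ)) *
      ∏ v ∈ S, (if ψ v ∈ A then hi (ψ v) else lo (ψ v)) = 0 := by
  refine Finset.sum_involution
    (fun A _ => if x₀ ∈ A then A.erase x₀ else insert x₀ A) ?_ ?_ ?_ ?_
  · intro A hA
    have hprod : (∏ v ∈ S, (if ψ v ∈ A then hi (ψ v) else lo (ψ v)))
        = ∏ v ∈ S, (if ψ v ∈ (if x₀ ∈ A then A.erase x₀ else insert x₀ A)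
            then hi (ψ v) else lo (ψ v)) := by
      refine Finset.prod_congr rfl fun v hv => ?_
      have hne := hψ v hv
      by_cases h : x₀ ∈ A <;> simp [h, hne, Finset.mem_erase, Finset.mem_insert]
    have hsign : (∏ _x ∈ S \ (if x₀ ∈ A then A.erase x₀ else insert x₀ A), (-1 : ℝ))
        = -(∏ _x ∈ S \ A, (-1 : ℝ)) := by
      by_cases h : x₀ ∈ A
      · simp only [h, if_true]
        have : S \ A.erase x₀ = insert x₀ (S \ A) := by
          ext y
          simp only [Finset.mem_sdiff, Finset.mem_erase, Finset.mem_insert]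
          constructor
          · rintro ⟨hyS, hy⟩
            by_cases hyx : y = x₀
            · exact Or.inl hyx
            · exact Or.inr ⟨hyS, fun hyA => hy ⟨hyx, hyA⟩⟩
          · rintro (rfl | ⟨hyS, hyA⟩)
            · exact ⟨hx₀, fun hc => hc.1 rfl⟩
            · exact ⟨hyS, fun hc => hyA hc.2⟩
        rw [this, Finset.prod_insert (by simp [Finset.mem_sdiff, h])]
        simp
      · simp only [h, if_false]
        have hx₀' : x₀ ∈ S \ A := Finset.mem_sdiff.2 ⟨hx₀, h⟩
        have : S \ insert x₀ A = (S \ A).erase x₀ := by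
          ext y
          simp only [Finset.mem_sdiff, Finset.mem_erase, Finset.mem_insert]
          tauto
        rw [this, ← Finset.mul_prod_erase (S \ A) _ hx₀']
        ring
    rw [← hprod, hsign]; ring
  · intro A hA _
    by_cases h : x₀ ∈ A
    · simp only [h, if_true]
      intro hc
      apply Finset.notMem_erase x₀ A
      rw [hc]; exact h
    · simp only [h, if_false]
      intro hc
      apply h
      rw [← hc]; exact Finset.mem_insert_self x₀ A
  · intro A hA
    rw [Finset.mem_powerset] at hA ⊢
    by_cases h : x₀ ∈ A
    · simp only [h, if_true]
      exact (Finset.erase_subset _ _).trans hA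
    · simp only [h, if_false]
      exact Finset.insert_subset hx₀ hA
  · intro A hA
    by_cases h : x₀ ∈ A
    · simp [h, Finset.notMem_erase, Finset.insert_erase h]
    · simp [h, Finset.mem_insert_self, Finset.erase_insert h]

private lemma expand_prod (z : V) (c : V → V → ℝ) (f : V → ℝ) :
    ∏ v ∈ Finset.univ.erase z, (∑ x, c v x * f x) =
      ∑ ψ ∈ Fintype.piFinset (fun v : V => if v = z then ({z} : Finset V) else Finset.univ),
        (∏ v ∈ Finset.univ.erase z, c v (ψ v)) * (∏ v ∈ Finset.univ.erase z, f (ψ v)) := by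
  set t : V → Finset V := fun v => if v = z then ({z} : Finset V) else Finset.univ with ht
  set H : V → V → ℝ := fun v x => if v = z then 1 else c v x * f x with hH
  have key : ∏ v ∈ Finset.univ.erase z, (∑ x, c v x * f x)
      = ∏ v, (∑ x ∈ t v, H v x) := by
    rw [← Finset.mul_prod_erase Finset.univ _ (Finset.mem_univ z)]
    have hz : (∑ x ∈ t z, H z x) = 1 := by simp [ht, hH]
    rw [hz, one_mul]
    refine Finset.prod_congr rfl fun v hv => ?_
    have hvz : v ≠ z := (Finset.mem_erase.1 hv).1
    simp [ht, hH, hvz]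
  rw [key, Finset.prod_univ_sum]
  refine Finset.sum_congr rfl fun ψ hψ => ?_
  rw [← Finset.mul_prod_erase Finset.univ _ (Finset.mem_univ z)]
  have hz : H z (ψ z) = 1 := by simp [hH]
  rw [hz, one_mul, ← Finset.prod_mul_distrib]
  refine Finset.prod_congr rfl fun v hv => ?_
  have hvz : v ≠ z := (Finset.mem_erase.1 hv).1
  simp [hH, hvz]

private lemma tree_struct (T : SimpleGraph V) (htree : T.IsTree) (z : V) :
    ∃ (dep : V → ℕ) (par : V → V),
      dep z = 0 ∧
      (∀ u, u ≠ z → T.Adj u (par u)) ∧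
      (∀ u v, T.Adj u v →
        (dep u = dep v + 1 ∧ par u = v) ∨ (dep v = dep u + 1 ∧ par v = u)) := by
  have hEU : ∀ u, ∃! p : T.Walk u z, p.IsPath := fun u => htree.existsUnique_path u z
  choose pa hpa hpau using hEU
  refine ⟨fun u => (pa u).length, fun u => (pa u).getVert 1, ?_, ?_, ?_⟩
  · have : (SimpleGraph.Walk.nil : T.Walk z z) = pa z := hpau z _ SimpleGraph.Walk.IsPath.nil
    show (pa z).length = 0
    rw [← this]; rfl
  · intro u hu
    have hn : ¬ (pa u).Nil := by
      intro hnil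
      exact hu (SimpleGraph.Walk.Nil.eq hnil)
    exact (pa u).adj_snd hn
  · intro u v h
    by_cases hu : u ∈ (pa v).support
    · right
      have ht : ((pa v).takeUntil u hu).IsPath := (hpa v).takeUntil hu
      have hd : ((pa v).dropUntil u hu).IsPath := (hpa v).dropUntil hu
      have hdrop : (pa v).dropUntil u hu = pa u := hpau u _ hd
      have hcons : (SimpleGraph.Walk.cons h.symm SimpleGraph.Walk.nil : T.Walk v u).IsPath := by
        rw [SimpleGraph.Walk.cons_isPath_iff]
        exact ⟨SimpleGraph.Walk.IsPath.nil, by simp [h.ne']⟩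
      have htake : (pa v).takeUntil u hu
          = SimpleGraph.Walk.cons h.symm SimpleGraph.Walk.nil := by
        have := htree.IsAcyclic.path_unique ⟨(pa v).takeUntil u hu, ht⟩
          ⟨SimpleGraph.Walk.cons h.symm SimpleGraph.Walk.nil, hcons⟩
        exact congrArg Subtype.val this
      have hspec := (pa v).take_spec hu
      rw [htake, hdrop] at hspec
      simp only [SimpleGraph.Walk.cons_append, SimpleGraph.Walk.nil_append] at hspec
      constructor
      · show (pa v).length = (pa u).length + 1
        rw [← hspec]; simp [SimpleGraph.Walk.length_cons]
      · show (pa v).getVert 1 = u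
        rw [← hspec]
        exact SimpleGraph.Walk.snd_cons _ h.symm
    · left
      have hw : (SimpleGraph.Walk.cons h (pa v)).IsPath := by
        rw [SimpleGraph.Walk.cons_isPath_iff]
        exact ⟨hpa v, hu⟩
      have hcons : SimpleGraph.Walk.cons h (pa v) = pa u := hpau u _ hw
      constructor
      · show (pa u).length = (pa v).length + 1
        rw [← hcons]; simp [SimpleGraph.Walk.length_cons]
      · show (pa u).getVert 1 = v
        rw [← hcons]
        exact SimpleGraph.Walk.snd_cons _ h

end AuxLemmas

/-- Every finite tree has an additive coloring from arbitrary lists of size two: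
if `T` is a tree and each vertex `v` carries a list `L v` of `2` distinct reals,
then there is a choice `f v ∈ L v` such that adjacent vertices get different
neighborhood sums. -/
theorem tree_additive_choice_from_lists
    {V : Type*} [Fintype V] (T : SimpleGraph V) (htree : T.IsTree)
    (L : V → Finset ℝ) (hL : ∀ v, (L v).card = 2) :
    ∃ f : V → ℝ, (∀ v, f v ∈ L v) ∧
      ∀ ⦃u v : V⦄, T.Adj u v → nsum T f u ≠ nsum T f v := by
  classical
  have hne : Nonempty V := htree.isConnected.nonempty
  obtain ⟨z⟩ := hne
  obtain ⟨dep, par, hdepz, hparadj, hadjcase⟩ := tree_struct T htree z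
  choose lo hi hlh hLeq using fun v => Finset.card_eq_two.1 (hL v)
  -- the sign function from the bipartition by depth parity
  set δ : V → ℝ := fun v => (-1 : ℝ) ^ (dep v) with hδ
  have hδadj : ∀ u v, T.Adj u v → δ v = -δ u := by
    intro u v h
    rcases hadjcase u v h with ⟨h1, _⟩ | ⟨h1, _⟩
    · show (-1:ℝ)^(dep v) = -(-1:ℝ)^(dep u)
      rw [h1, pow_succ]; ring
    · show (-1:ℝ)^(dep v) = -(-1:ℝ)^(dep u)
      rw [h1, pow_succ]; ring
  have hδsq : ∀ v, δ v * δ v = 1 := by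
    intro v
    show (-1:ℝ)^(dep v) * (-1:ℝ)^(dep v) = 1
    rw [← mul_pow]; norm_num
  -- the coefficient matrix
  set c : V → V → ℝ := fun v x =>
    (if T.Adj v x then (1:ℝ) else 0) - (if T.Adj (par v) x then (1:ℝ) else 0) with hc
  set S : Finset V := Finset.univ.erase z with hS
  have hmemS : ∀ v, v ∈ S ↔ v ≠ z := by
    intro v; simp [hS]
  -- the key sign identity
  have hkey : ∀ v, v ≠ z → ∀ x, c v x = -(δ v * δ x) * (c v x) ^ 2 := by
    intro v hv x
    have hpv : T.Adj v (par v) := hparadj v hv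
    have hδp : δ (par v) = -δ v := hδadj v (par v) hpv
    by_cases h1 : T.Adj v x <;> by_cases h2 : T.Adj (par v) x
    · simp [hc, h1, h2]
    · have hx : δ x = -δ v := hδadj v x h1
      simp only [hc, h1, h2, if_true, if_false, sub_zero]
      rw [hx]
      linear_combination -(hδsq v)
    · have hx : δ x = -δ (par v) := hδadj (par v) x h2
      rw [hδp] at hx
      simp only [hc, h1, h2, if_true, if_false, zero_sub]
      rw [hx]
      linear_combination hδsq v
    · simp [hc, h1, h2]
  -- grid data
  set fA : Finset V → V → ℝ := fun A v => if v ∈ A then hi v else lo v with hfA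
  set wt : Finset V → ℝ := fun A => ∏ _x ∈ S \ A, (-1:ℝ) with hwt
  set E : ℝ := ∏ _v ∈ S, (-1:ℝ) with hE
  set Pz : ℝ := E * ∏ x ∈ S, (hi x - lo x) with hPz
  have hEsq : E * E = 1 := by
    rw [hE, Finset.prod_const, ← mul_pow]; norm_num
  have hPzne : Pz ≠ 0 := by
    rw [hPz]
    refine mul_ne_zero ?_ ?_
    · rw [hE, Finset.prod_const]
      exact pow_ne_zero _ (by norm_num)
    · exact Finset.prod_ne_zero_iff.2 fun v _ => sub_ne_zero_of_ne (hlh v).symm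
  set t : V → Finset V := fun v => if v = z then ({z}:Finset V) else Finset.univ with htdef
  -- expansion of each product
  have hFA : ∀ A : Finset V, (∏ v ∈ S, (∑ x, c v x * fA A x))
      = ∑ ψ ∈ Fintype.piFinset t,
          (∏ v ∈ S, c v (ψ v)) * (∏ v ∈ S, fA A (ψ v)) := by
    intro A
    rw [hS]
    exact expand_prod z c (fA A)
  set total : ℝ := ∑ A ∈ S.powerset, wt A * ∏ v ∈ S, (∑ x, c v x * fA A x) with htotal
  have hswap : total = ∑ ψ ∈ Fintype.piFinset t,
      (∏ v ∈ S, c v (ψ v)) * (∑ A ∈ S.powerset, wt A * ∏ v ∈ S, fA A (ψ v)) := by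
    rw [htotal]
    calc ∑ A ∈ S.powerset, wt A * ∏ v ∈ S, (∑ x, c v x * fA A x)
        = ∑ A ∈ S.powerset, ∑ ψ ∈ Fintype.piFinset t,
            wt A * ((∏ v ∈ S, c v (ψ v)) * (∏ v ∈ S, fA A (ψ v))) := by
          refine Finset.sum_congr rfl fun A _ => ?_
          rw [hFA A, Finset.mul_sum]
      _ = ∑ ψ ∈ Fintype.piFinset t, ∑ A ∈ S.powerset,
            wt A * ((∏ v ∈ S, c v (ψ v)) * (∏ v ∈ S, fA A (ψ v))) := Finset.sum_comm
      _ = ∑ ψ ∈ Fintype.piFinset t,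
            (∏ v ∈ S, c v (ψ v)) * (∑ A ∈ S.powerset, wt A * ∏ v ∈ S, fA A (ψ v)) := by
          refine Finset.sum_congr rfl fun ψ _ => ?_
          rw [Finset.mul_sum]
          refine Finset.sum_congr rfl fun A _ => ?_
          ring
  -- classification of the terms
  have hterm : ∀ ψ ∈ Fintype.piFinset t,
      (∏ v ∈ S, c v (ψ v)) * (∑ A ∈ S.powerset, wt A * ∏ v ∈ S, fA A (ψ v)) = 0 ∨
      (∏ v ∈ S, c v (ψ v)) * (∑ A ∈ S.powerset, wt A * ∏ v ∈ S, fA A (ψ v)) = Pz := by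
    intro ψ _
    by_cases him : S.image ψ = S
    · have hinj : Set.InjOn ψ S := Finset.injOn_of_card_image_eq (by rw [him])
      have halt : (∑ A ∈ S.powerset, wt A * ∏ v ∈ S, fA A (ψ v))
          = ∏ x ∈ S, (hi x - lo x) := by
        have h := alt_sum_bij S lo hi ψ hinj him
        simpa [hwt, hfA] using h
      by_cases hCC : (∏ v ∈ S, c v (ψ v)) = 0
      · left; rw [hCC]; ring
      · right
        have h1 : (∏ v ∈ S, c v (ψ v))
            = (∏ v ∈ S, -(δ v * δ (ψ v))) * (∏ v ∈ S, c v (ψ v)) ^ 2 := by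
          rw [← Finset.prod_pow, ← Finset.prod_mul_distrib]
          exact Finset.prod_congr rfl fun v hv => hkey v ((hmemS v).1 hv) (ψ v)
        have e1 : ∏ v ∈ S, δ (ψ v) = ∏ x ∈ S, δ x := by
          conv_rhs => rw [← him, Finset.prod_image (fun a ha b hb hab => hinj ha hb hab)]
        have h2 : (∏ v ∈ S, -(δ v * δ (ψ v))) = E := by
          calc ∏ v ∈ S, -(δ v * δ (ψ v))
              = ∏ v ∈ S, ((-1) * (δ v * δ (ψ v))) := by
                exact Finset.prod_congr rfl fun v _ => by ring
            _ = E * ((∏ v ∈ S, δ v) * (∏ v ∈ S, δ (ψ v))) := by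
                rw [Finset.prod_mul_distrib, Finset.prod_mul_distrib, hE]
            _ = E * ∏ v ∈ S, (δ v * δ v) := by rw [e1, ← Finset.prod_mul_distrib]
            _ = E := by
                rw [Finset.prod_congr rfl fun v _ => hδsq v]
                simp
        have h3 : (∏ v ∈ S, c v (ψ v)) * 1
            = (∏ v ∈ S, c v (ψ v)) * (E * (∏ v ∈ S, c v (ψ v))) := by
          rw [mul_one]
          calc (∏ v ∈ S, c v (ψ v))
              = (∏ v ∈ S, -(δ v * δ (ψ v))) * (∏ v ∈ S, c v (ψ v)) ^ 2 := h1
            _ = (∏ v ∈ S, c v (ψ v)) * (E * (∏ v ∈ S, c v (ψ v))) := by rw [h2]; ring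
        have h4 : (1:ℝ) = E * (∏ v ∈ S, c v (ψ v)) := mul_left_cancel₀ hCC h3
        have h5 : (∏ v ∈ S, c v (ψ v)) = E := by
          calc (∏ v ∈ S, c v (ψ v)) = (E * E) * (∏ v ∈ S, c v (ψ v)) := by
                rw [hEsq, one_mul]
            _ = E * (E * (∏ v ∈ S, c v (ψ v))) := by ring
            _ = E * 1 := by rw [← h4]
            _ = E := mul_one E
        rw [halt, h5, hPz]
    · left
      have hsub : ¬ S ⊆ S.image ψ := by
        intro hsub
        exact him (Finset.eq_of_subset_of_card_le hsub Finset.card_image_le).symm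
      obtain ⟨x₀, hx₀S, hx₀im⟩ := Finset.not_subset.1 hsub
      have hψne : ∀ v ∈ S, ψ v ≠ x₀ := fun v hv heq =>
        hx₀im (Finset.mem_image.2 ⟨v, hv, heq⟩)
      have h := alt_sum_deg S lo hi ψ x₀ hx₀S hψne
      have halt : (∑ A ∈ S.powerset, wt A * ∏ v ∈ S, fA A (ψ v)) = 0 := by
        simpa [hwt, hfA] using h
      rw [halt, mul_zero]
  -- the identity map is a nonzero term
  have hid_mem : (id : V → V) ∈ Fintype.piFinset t := by
    rw [Fintype.mem_piFinset]
    intro v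
    by_cases h : v = z <;> simp [htdef, h]
  have hCCid : (∏ v ∈ S, c v (id v)) = E := by
    rw [hE]
    refine Finset.prod_congr rfl fun v hv => ?_
    have hvz := (hmemS v).1 hv
    have h1 : ¬ T.Adj v v := T.loopless.irrefl v
    have h2 : T.Adj (par v) v := (hparadj v hvz).symm
    simp [hc, h1, h2]
  have hterm_id : (∏ v ∈ S, c v (id v))
      * (∑ A ∈ S.powerset, wt A * ∏ v ∈ S, fA A (id v)) = Pz := by
    have him : S.image (id : V → V) = S := Finset.image_id
    have hinj : Set.InjOn (id : V → V) S := fun a _ b _ h => h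
    have halt : (∑ A ∈ S.powerset, wt A * ∏ v ∈ S, fA A (id v))
        = ∏ x ∈ S, (hi x - lo x) := by
      have h := alt_sum_bij S lo hi id hinj him
      simpa [hwt, hfA] using h
    rw [hCCid, halt, hPz]
  -- the total is nonzero
  have htot_ne : total ≠ 0 := by
    rw [hswap]
    rw [← Finset.sum_filter_add_sum_filter_not (Fintype.piFinset t)
      (fun ψ => (∏ v ∈ S, c v (ψ v))
        * (∑ A ∈ S.powerset, wt A * ∏ v ∈ S, fA A (ψ v)) = 0)]
    have hzero : (∑ ψ ∈ (Fintype.piFinset t).filter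
        (fun ψ => (∏ v ∈ S, c v (ψ v))
          * (∑ A ∈ S.powerset, wt A * ∏ v ∈ S, fA A (ψ v)) = 0),
        (∏ v ∈ S, c v (ψ v))
          * (∑ A ∈ S.powerset, wt A * ∏ v ∈ S, fA A (ψ v))) = 0 :=
      Finset.sum_eq_zero fun ψ hψ => (Finset.mem_filter.1 hψ).2
    rw [hzero, zero_add]
    have hconst : (∑ ψ ∈ (Fintype.piFinset t).filter
        (fun ψ => ¬((∏ v ∈ S, c v (ψ v))
          * (∑ A ∈ S.powerset, wt A * ∏ v ∈ S, fA A (ψ v)) = 0)),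
        (∏ v ∈ S, c v (ψ v))
          * (∑ A ∈ S.powerset, wt A * ∏ v ∈ S, fA A (ψ v)))
        = ((Fintype.piFinset t).filter
          (fun ψ => ¬((∏ v ∈ S, c v (ψ v))
            * (∑ A ∈ S.powerset, wt A * ∏ v ∈ S, fA A (ψ v)) = 0))).card • Pz := by
      rw [← Finset.sum_const]
      refine Finset.sum_congr rfl fun ψ hψ => ?_
      obtain ⟨hψm, hψne⟩ := Finset.mem_filter.1 hψ
      exact (hterm ψ hψm).resolve_left hψne
    rw [hconst]
    have hmemf : (id : V → V) ∈ (Fintype.piFinset t).filter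
        (fun ψ => ¬((∏ v ∈ S, c v (ψ v))
          * (∑ A ∈ S.powerset, wt A * ∏ v ∈ S, fA A (ψ v)) = 0)) := by
      refine Finset.mem_filter.2 ⟨hid_mem, ?_⟩
      rw [hterm_id]
      exact hPzne
    have hcard : ((Fintype.piFinset t).filter
        (fun ψ => ¬((∏ v ∈ S, c v (ψ v))
          * (∑ A ∈ S.powerset, wt A * ∏ v ∈ S, fA A (ψ v)) = 0))).card ≠ 0 :=
      Finset.card_ne_zero_of_mem hmemf
    rw [nsmul_eq_mul]
    exact mul_ne_zero (Nat.cast_ne_zero.2 hcard) hPzne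
  -- extract a good assignment
  have hex : ∃ A ∈ S.powerset, wt A * ∏ v ∈ S, (∑ x, c v x * fA A x) ≠ 0 := by
    by_contra hcon
    push_neg at hcon
    exact htot_ne (by rw [htotal]; exact Finset.sum_eq_zero hcon)
  obtain ⟨A, _, hAne⟩ := hex
  have hFne : (∏ v ∈ S, (∑ x, c v x * fA A x)) ≠ 0 := by
    intro h0
    exact hAne (by rw [h0, mul_zero])
  refine ⟨fA A, ?_, ?_⟩
  · intro v
    rw [hLeq v]
    by_cases h : v ∈ A <;> simp [hfA, h]
  · -- adjacency constraints
    have hnsum : ∀ v : V, (∑ x, c v x * fA A x)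
        = nsum T (fA A) v - nsum T (fA A) (par v) := by
      intro v
      rw [nsum_eq_sum_ite T (fA A) v, nsum_eq_sum_ite T (fA A) (par v),
        ← Finset.sum_sub_distrib]
      refine Finset.sum_congr rfl fun x _ => ?_
      by_cases h1 : T.Adj v x <;> by_cases h2 : T.Adj (par v) x <;>
        simp [hc, h1, h2]
    have hfac : ∀ x ∈ S, nsum T (fA A) x ≠ nsum T (fA A) (par x) := by
      intro x hx
      have h := (Finset.prod_ne_zero_iff.1 hFne) x hx
      rw [hnsum x] at h
      exact sub_ne_zero.1 h
    intro u v hadj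
    rcases hadjcase u v hadj with ⟨h1, h2⟩ | ⟨h1, h2⟩
    · have huz : u ≠ z := by
        intro hzz
        rw [hzz, hdepz] at h1
        omega
      have h := hfac u ((hmemS u).2 huz)
      rw [h2] at h
      exact h
    · have hvz : v ≠ z := by
        intro hzz
        rw [hzz, hdepz] at h1
        omega
      have h := hfac v ((hmemS v).2 hvz)
      rw [h2] at h
      exact h.symm
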